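/- Let k ≥ 1, let A ∈ M_{2^k}(ℂ) have diagonal entries A_{ℓℓ} = d_ℓ for ℓ = 1,…,2^k, and let n ≥ 1. Then the diagonal of A(n) ∈ M_{2^{k+n−1}}(ℂ) is given as follows: for every ℓ with 1 ≤ ℓ ≤ 2^{k−1} and every h with 1 ≤ h ≤ 2^{n−1}, the (2^n(ℓ−1)+2h−1)-th diagonal entry of A(n) equals γ_{ℓ,h−1}^n and the (2^n(ℓ−1)+2h)-th diagonal entry of A(n) equals γ_{ℓ,h}^n, where γ_{ℓ,h}^n = d_{2ℓ−1} + (h/2^{n−1})(d_{2ℓ} − d_{2ℓ−1}). -/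

import Mathlib

open Matrix
open scoped Kronecker

noncomputable section

/-- Cast a square matrix along an equality of sizes. -/
def mcast {m n : ℕ} (h : m = n) (A : Matrix (Fin m) (Fin m) ℂ) :
    Matrix (Fin n) (Fin n) ℂ :=
  Matrix.reindex (finCongr h) (finCongr h) A

/-- `A ⊗ I₂` in the paper's convention, i.e. the block-diagonal matrix `diag(A, A)`
(used for the recursion `W_{n+1} = Wₙ ⊗ I₂ = diag(Wₙ, Wₙ)`). -/
def blockDup {m : ℕ} (A : Matrix (Fin m) (Fin m) ℂ) :
    Matrix (Fin (2 * m)) (Fin (2 * m)) ℂ :=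
  Matrix.reindex finProdFinEquiv finProdFinEquiv
    ((1 : Matrix (Fin 2) (Fin 2) ℂ) ⊗ₖ A)

/-- `I₂ ⊗ A` in the paper's convention: each entry `a_{ij}` is placed at the (1-based)
positions `(2i−1, 2j−1)` and `(2i, 2j)`.  This is the coherent embedding
`φ(A) = I₂ ⊗ A` of the paper, for which `e_{ij} ↦ e_{2i−1,2j−1} + e_{2i,2j}`. -/
def entryDup {m : ℕ} (A : Matrix (Fin m) (Fin m) ℂ) :
    Matrix (Fin (m * 2)) (Fin (m * 2)) ℂ :=
  Matrix.reindex finProdFinEquiv finProdFinEquiv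
    (A ⊗ₖ (1 : Matrix (Fin 2) (Fin 2) ℂ))

/-- The 4 × 4 matrix `W₁`. -/
def W1 : Matrix (Fin 4) (Fin 4) ℂ :=
  !![1, 0, 0, 0;
     0, (Real.sqrt 2 : ℂ)⁻¹, -(Real.sqrt 2 : ℂ)⁻¹, 0;
     0, (Real.sqrt 2 : ℂ)⁻¹, (Real.sqrt 2 : ℂ)⁻¹, 0;
     0, 0, 0, 1]

/-- The sequence `Wₙ ∈ M_{2^{n+1}}(ℂ)`, with `W_{n+1} = Wₙ ⊗ I₂ = diag(Wₙ, Wₙ)`.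
(The value at `0` is irrelevant; all statements only involve `n ≥ 1`.) -/
def Wmat : (n : ℕ) → Matrix (Fin (2 ^ (n + 1))) (Fin (2 ^ (n + 1))) ℂ
  | 0 => 1
  | 1 => mcast (by norm_num) W1
  | (n + 2) => mcast (by ring) (blockDup (Wmat (n + 1)))

/-- `iterA k A n` is the matrix `A(n+1) ∈ M_{2^{k+n}}(ℂ)` of the paper:
`A(1) = A`, `A(n+1) = W_{k+n-1} (I₂ ⊗ A(n)) W_{k+n-1}^*`. -/
def iterA (k : ℕ) (A : Matrix (Fin (2 ^ k)) (Fin (2 ^ k)) ℂ) :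
    (n : ℕ) → Matrix (Fin (2 ^ (k + n))) (Fin (2 ^ (k + n))) ℂ
  | 0 => A
  | (n + 1) => Wmat (k + n) * mcast (by ring) (entryDup (iterA k A n)) * (Wmat (k + n))ᴴ

/-- Squared Frobenius (Hilbert–Schmidt) norm. -/
def frobSq {m n : ℕ} (A : Matrix (Fin m) (Fin n) ℂ) : ℝ :=
  ∑ i, ∑ j, ‖A i j‖ ^ 2

/-- `diffA k A n = A(n+2) - I₂ ⊗ A(n+1)` in the paper's numbering. -/
def diffA (k : ℕ) (A : Matrix (Fin (2 ^ k)) (Fin (2 ^ k)) ℂ) (n : ℕ) :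
    Matrix (Fin (2 ^ (k + n + 1))) (Fin (2 ^ (k + n + 1))) ℂ :=
  iterA k A (n + 1) - mcast (by ring) (entryDup (iterA k A n))

/-- The diagonal compression `E_{D(m)}`. -/
def diagComp {m : ℕ} (A : Matrix (Fin m) (Fin m) ℂ) : Matrix (Fin m) (Fin m) ℂ :=
  Matrix.diagonal (fun i => A i i)

/-- Index bound: for `1 ≤ l ≤ 2^{k−1}` and `1 ≤ h ≤ 2^{n−1}`,
the 1-based index `2^n(l−1) + 2h` is at most `2^{k+n−1}`. -/
lemma idxBound {k n l h : ℕ} (hk : 1 ≤ k) (hn : 1 ≤ n) (hl1 : 1 ≤ l)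
    (hl2 : l ≤ 2 ^ (k - 1)) (hh2 : h ≤ 2 ^ (n - 1)) :
    2 ^ n * (l - 1) + 2 * h ≤ 2 ^ (k + (n - 1)) := by
  have e1 : 2 * h ≤ 2 ^ n := by
    have e : (2 : ℕ) ^ n = 2 * 2 ^ (n - 1) := by
      rw [← pow_succ']
      congr 1
      omega
    omega
  have e2 : 2 ^ n * l ≤ 2 ^ (k + (n - 1)) := by
    calc 2 ^ n * l ≤ 2 ^ n * 2 ^ (k - 1) := Nat.mul_le_mul_left _ hl2
      _ = 2 ^ (k + (n - 1)) := by rw [← pow_add]; congr 1; omega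
  have e3 : 2 ^ n * (l - 1) + 2 ^ n = 2 ^ n * l := by
    obtain ⟨l', rfl⟩ : ∃ l'', l = l'' + 1 := ⟨l - 1, by omega⟩
    simp [Nat.mul_succ]
  omega

/-- For `1 ≤ k` and `l ≤ 2^{k−1}` one has `2l ≤ 2^k`. -/
lemma twoLBound {k l : ℕ} (hk : 1 ≤ k) (hl2 : l ≤ 2 ^ (k - 1)) : 2 * l ≤ 2 ^ k := by
  calc 2 * l ≤ 2 * 2 ^ (k - 1) := by omega
    _ = 2 ^ k := by rw [← pow_succ']; congr 1; omega

lemma mcast_apply {m n : ℕ} (h : m = n) (A : Matrix (Fin m) (Fin m) ℂ) (i j : Fin n) :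
    mcast h A i j = A ⟨i, h ▸ i.2⟩ ⟨j, h ▸ j.2⟩ := rfl

lemma entryDup_apply {m : ℕ} (A : Matrix (Fin m) (Fin m) ℂ) (x y : Fin (m * 2)) :
    entryDup A x y =
      if (x : ℕ) % 2 = (y : ℕ) % 2 then
        A ⟨(x : ℕ) / 2, by omega⟩ ⟨(y : ℕ) / 2, by omega⟩ else 0 := by
  simp only [entryDup, reindex_apply, submatrix_apply, finProdFinEquiv_symm_apply,
    kroneckerMap_apply, Matrix.one_apply]
  by_cases h : (x : ℕ) % 2 = (y : ℕ) % 2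
  · rw [if_pos h, if_pos (by simp [Fin.ext_iff, Fin.modNat, h]), mul_one]
    congr 1 <;> simp [Fin.ext_iff, Fin.divNat]
  · rw [if_neg h, if_neg (by simp [Fin.ext_iff, Fin.modNat]; omega), mul_zero]

lemma blockDup_apply {m : ℕ} (A : Matrix (Fin m) (Fin m) ℂ) (x y : Fin (2 * m)) :
    blockDup A x y =
      if (x : ℕ) / m = (y : ℕ) / m then
        A ⟨(x : ℕ) % m, Nat.mod_lt _ (by have := x.2; omega)⟩ ⟨(y : ℕ) % m, Nat.mod_lt _ (by have := y.2; omega)⟩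
      else 0 := by
  simp only [blockDup, reindex_apply, submatrix_apply, finProdFinEquiv_symm_apply,
    kroneckerMap_apply, Matrix.one_apply]
  by_cases h : (x : ℕ) / m = (y : ℕ) / m
  · rw [if_pos (by simp [Fin.ext_iff, Fin.divNat, h]), if_pos h, one_mul]
    congr 1 <;> simp [Fin.ext_iff, Fin.modNat]
  · rw [if_neg (by simp [Fin.ext_iff, Fin.divNat]; omega), if_neg h, zero_mul]

lemma div4_eq_iff {M x y : ℕ} (c : ℕ) (hc : M = 4 * c) (hc0 : 0 < c) :
    (x / M = y / M ∧ (x % M) / 4 = (y % M) / 4) ↔ x / 4 = y / 4 := by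
  subst hc
  have h1 : x / (4 * c) = x / 4 / c := by rw [Nat.div_div_eq_div_mul]
  have h2 : y / (4 * c) = y / 4 / c := by rw [Nat.div_div_eq_div_mul]
  have h3 : x % (4 * c) / 4 = x / 4 % c := by
    exact Nat.mod_mul_right_div_self x 4 c
  have h4 : y % (4 * c) / 4 = y / 4 % c := by
    exact Nat.mod_mul_right_div_self y 4 c
  rw [h1, h2, h3, h4]
  constructor
  · rintro ⟨ha, hb⟩
    have e1 := Nat.div_add_mod (x / 4) c
    have e2 := Nat.div_add_mod (y / 4) c
    rw [ha, hb] at e1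
    exact e1.symm.trans e2
  · rintro h; rw [h]; exact ⟨rfl, rfl⟩

lemma Wmat_apply : ∀ (m : ℕ), 1 ≤ m → ∀ (i j : Fin (2 ^ (m + 1))),
    Wmat m i j =
      if (i : ℕ) / 4 = (j : ℕ) / 4 then
        W1 ⟨(i : ℕ) % 4, Nat.mod_lt _ (by omega)⟩ ⟨(j : ℕ) % 4, Nat.mod_lt _ (by omega)⟩
      else 0
  | 0, h => by omega
  | 1, _ => by
    intro i j
    have hi : (i : ℕ) < 4 := by have := i.2; norm_num at this; omega
    have hj : (j : ℕ) < 4 := by have := j.2; norm_num at this; omega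
    rw [Wmat, mcast_apply]
    rw [if_pos (by omega)]
    congr 1 <;> simp [Fin.ext_iff] <;> omega
  | (m + 2), _ => by
    intro i j
    have hM : (2:ℕ) ^ (m + 3) = 2 * 2 ^ (m + 2) := by ring
    rw [Wmat, mcast_apply, blockDup_apply, Wmat_apply (m + 1) (by omega)]
    have hc : (2:ℕ) ^ (m + 2) = 4 * 2 ^ m := by ring
    have hiff := div4_eq_iff (x := (i:ℕ)) (y := (j:ℕ)) (2 ^ m) hc (Nat.pow_pos (by norm_num))
    have hmod : ∀ z : ℕ, z % 2 ^ (m + 2) % 4 = z % 4 := fun z =>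
      Nat.mod_mod_of_dvd z ⟨2 ^ m, hc⟩
    by_cases h : (i : ℕ) / 4 = (j : ℕ) / 4
    · rw [if_pos h]
      rw [if_pos (hiff.mpr h).1, if_pos (hiff.mpr h).2]
      congr 1 <;> simp [Fin.ext_iff, hmod]
    · rw [if_neg h]
      by_cases h1 : (i : ℕ) / 2 ^ (m + 2) = (j : ℕ) / 2 ^ (m + 2)
      · rw [if_pos h1, if_neg (fun h2 => h (hiff.mp ⟨h1, h2⟩))]
      · rw [if_neg h1]

lemma sum_block {N : ℕ} (p : ℕ) (hp : 4 * p + 3 < N) (f : Fin N → ℂ)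
    (hf : ∀ a : Fin N, (a : ℕ) / 4 ≠ p → f a = 0) :
    ∑ a, f a = f ⟨4 * p, by omega⟩ + f ⟨4 * p + 1, by omega⟩ +
      f ⟨4 * p + 2, by omega⟩ + f ⟨4 * p + 3, by omega⟩ := by
  classical
  set s : Finset (Fin N) := {⟨4 * p, by omega⟩, ⟨4 * p + 1, by omega⟩,
    ⟨4 * p + 2, by omega⟩, ⟨4 * p + 3, by omega⟩} with hs
  rw [← Finset.sum_subset (Finset.subset_univ s)]
  · rw [hs]
    rw [Finset.sum_insert (by simp [Fin.ext_iff]), Finset.sum_insert (by simp [Fin.ext_iff]),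
      Finset.sum_insert (by simp [Fin.ext_iff]), Finset.sum_singleton]
    ring
  · intro x _ hx
    apply hf
    intro hd
    apply hx
    simp only [hs, Finset.mem_insert, Finset.mem_singleton, Fin.ext_iff]
    have := x.2
    omega

lemma W1_ev (a b : ℕ) (ha : a < 4) (hb : b < 4) :
    W1 ⟨a, ha⟩ ⟨b, hb⟩ =
      if a = 0 ∧ b = 0 then 1
      else if a = 3 ∧ b = 3 then 1
      else if (a = 1 ∨ a = 2) ∧ b = 1 then (Real.sqrt 2 : ℂ)⁻¹
      else if a = 2 ∧ b = 2 then (Real.sqrt 2 : ℂ)⁻¹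
      else if a = 1 ∧ b = 2 then -(Real.sqrt 2 : ℂ)⁻¹
      else 0 := by
  interval_cases a <;> interval_cases b <;> norm_num <;> rfl

set_option maxHeartbeats 2000000 in
lemma conj_diag (m : ℕ) (hm : 1 ≤ m) (h2 : 2 ^ m * 2 = 2 ^ (m + 1))
    (B : Matrix (Fin (2 ^ m)) (Fin (2 ^ m)) ℂ)
    (d : Fin (2 ^ (m + 1))) (p r : ℕ) (hd : (d : ℕ) = 4 * p + r) (hr : r < 4)
    (hp : 2 * p + 1 < 2 ^ m) :
    (Wmat m * mcast h2 (entryDup B) * (Wmat m)ᴴ) d d =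
      if r = 0 then B ⟨2 * p, by omega⟩ ⟨2 * p, by omega⟩
      else if r = 3 then B ⟨2 * p + 1, hp⟩ ⟨2 * p + 1, hp⟩
      else (B ⟨2 * p, by omega⟩ ⟨2 * p, by omega⟩ +
        B ⟨2 * p + 1, hp⟩ ⟨2 * p + 1, hp⟩) / 2 := by
  have hp3 : 4 * p + 3 < 2 ^ (m + 1) := by have := d.2; omega
  set M := mcast h2 (entryDup B) with hMdef
  have hW0 : ∀ x : Fin (2 ^ (m + 1)), (x : ℕ) / 4 ≠ p → Wmat m d x = 0 := by
    intro x hx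
    rw [Wmat_apply m hm, if_neg (by omega)]
  have hW : ∀ (a : ℕ) (ha : a < 4) (h' : 4 * p + a < 2 ^ (m + 1)),
      Wmat m d ⟨4 * p + a, h'⟩ = W1 ⟨r, hr⟩ ⟨a, ha⟩ := by
    intro a ha h'
    rw [Wmat_apply m hm, if_pos (by simp; omega)]
    congr 1 <;> simp <;> omega
  have hMe : ∀ (a b : ℕ) (ha : a < 4) (hb : b < 4)
      (h' : 4 * p + a < 2 ^ (m + 1)) (h'' : 4 * p + b < 2 ^ (m + 1)),
      M ⟨4 * p + a, h'⟩ ⟨4 * p + b, h''⟩ =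
        if a % 2 = b % 2 then B ⟨2 * p + a / 2, by omega⟩ ⟨2 * p + b / 2, by omega⟩
        else 0 := by
    intro a b ha hb h' h''
    rw [hMdef, mcast_apply, entryDup_apply]
    by_cases hab : a % 2 = b % 2
    · rw [if_pos (by simp; omega), if_pos hab]
      congr 1 <;> simp <;> omega
    · rw [if_neg (by simp; omega), if_neg hab]
  have inner : ∀ (y : Fin (2 ^ (m + 1))), (Wmat m * M) d y =
      Wmat m d ⟨4 * p + 0, by omega⟩ * M ⟨4 * p + 0, by omega⟩ y
      + Wmat m d ⟨4 * p + 1, by omega⟩ * M ⟨4 * p + 1, by omega⟩ y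
      + Wmat m d ⟨4 * p + 2, by omega⟩ * M ⟨4 * p + 2, by omega⟩ y
      + Wmat m d ⟨4 * p + 3, by omega⟩ * M ⟨4 * p + 3, by omega⟩ y := by
    intro y
    rw [Matrix.mul_apply]
    have := sum_block p hp3 (fun a => Wmat m d a * M a y)
      (fun a ha => by show Wmat m d a * M a y = 0; rw [hW0 a ha, zero_mul])
    exact this
  rw [Matrix.mul_apply]
  have outer := sum_block p hp3 (fun b => (Wmat m * M) d b * (Wmat m)ᴴ b d)
    (fun b hb => by
      show (Wmat m * M) d b * (Wmat m)ᴴ b d = 0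
      rw [Matrix.conjTranspose_apply, hW0 b hb, star_zero, mul_zero])
  have outer' : ∑ j, (Wmat m * M) d j * (Wmat m)ᴴ j d =
      (Wmat m * M) d ⟨4 * p + 0, by omega⟩ * (Wmat m)ᴴ ⟨4 * p + 0, by omega⟩ d
      + (Wmat m * M) d ⟨4 * p + 1, by omega⟩ * (Wmat m)ᴴ ⟨4 * p + 1, by omega⟩ d
      + (Wmat m * M) d ⟨4 * p + 2, by omega⟩ * (Wmat m)ᴴ ⟨4 * p + 2, by omega⟩ d
      + (Wmat m * M) d ⟨4 * p + 3, by omega⟩ * (Wmat m)ᴴ ⟨4 * p + 3, by omega⟩ d := by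
    exact outer
  rw [outer']
  simp only [inner, Matrix.conjTranspose_apply]
  rw [hW 0 (by norm_num) (by omega), hW 1 (by norm_num) (by omega), hW 2 (by norm_num) (by omega), hW 3 (by norm_num) (by omega)]
  rw [hMe 0 0 (by norm_num) (by norm_num) (by omega) (by omega), hMe 0 1 (by norm_num) (by norm_num) (by omega) (by omega), hMe 0 2 (by norm_num) (by norm_num) (by omega) (by omega), hMe 0 3 (by norm_num) (by norm_num) (by omega) (by omega), hMe 1 0 (by norm_num) (by norm_num) (by omega) (by omega), hMe 1 1 (by norm_num) (by norm_num) (by omega) (by omega), hMe 1 2 (by norm_num) (by norm_num) (by omega) (by omega), hMe 1 3 (by norm_num) (by norm_num) (by omega) (by omega), hMe 2 0 (by norm_num) (by norm_num) (by omega) (by omega), hMe 2 1 (by norm_num) (by norm_num) (by omega) (by omega), hMe 2 2 (by norm_num) (by norm_num) (by omega) (by omega), hMe 2 3 (by norm_num) (by norm_num) (by omega) (by omega), hMe 3 0 (by norm_num) (by norm_num) (by omega) (by omega), hMe 3 1 (by norm_num) (by norm_num) (by omega) (by omega), hMe 3 2 (by norm_num) (by norm_num) (by omega) (by omega), hMe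 3 3 (by norm_num) (by norm_num) (by omega) (by omega)]
  have hcc : ((Real.sqrt 2 : ℂ))⁻¹ * ((Real.sqrt 2 : ℂ))⁻¹ = (2 : ℂ)⁻¹ := by
    rw [← mul_inv, ← Complex.ofReal_mul, Real.mul_self_sqrt (by norm_num)]; norm_num
  have hconj : (starRingEnd ℂ) ((Real.sqrt 2 : ℂ))⁻¹ = ((Real.sqrt 2 : ℂ))⁻¹ := by
    rw [map_inv₀, Complex.conj_ofReal]
  have hcc2 : ((Real.sqrt 2 : ℂ))⁻¹ ^ 2 = (2 : ℂ)⁻¹ := by rw [sq]; exact hcc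
  interval_cases r
  all_goals simp only [W1_ev]
  all_goals norm_num [Complex.star_def, hconj]
  all_goals (ring_nf; simp only [hcc2]; ring)

lemma pow_ne' (t : ℕ) : ((2 : ℂ) ^ t) ≠ 0 := pow_ne_zero _ two_ne_zero

set_option maxHeartbeats 1000000 in
lemma diag_formula (k : ℕ) (hk : 1 ≤ k) (A : Matrix (Fin (2 ^ k)) (Fin (2 ^ k)) ℂ)
    (h2L : ∀ L : ℕ, L < 2 ^ (k - 1) → 2 * L + 1 < 2 ^ k) :
    ∀ (t : ℕ) (L mm : ℕ) (hL : L < 2 ^ (k - 1)) (hm : mm < 2 ^ (t + 1))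
      (hidx : 2 ^ (t + 1) * L + mm < 2 ^ (k + t)),
    iterA k A t ⟨2 ^ (t + 1) * L + mm, hidx⟩ ⟨2 ^ (t + 1) * L + mm, hidx⟩ =
      A ⟨2 * L, by have := h2L L hL; omega⟩ ⟨2 * L, by have := h2L L hL; omega⟩ +
        (((mm + 1) / 2 : ℕ) : ℂ) / 2 ^ t *
          (A ⟨2 * L + 1, h2L L hL⟩ ⟨2 * L + 1, h2L L hL⟩ -
            A ⟨2 * L, by have := h2L L hL; omega⟩ ⟨2 * L, by have := h2L L hL; omega⟩) := by
  intro t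
  induction t with
  | zero =>
    intro L mm hL hm hidx
    interval_cases mm
    · norm_num
      congr 1 <;> simp [Fin.ext_iff] <;> omega
    · norm_num
      rfl
  | succ t IH =>
    intro L mm hL hm hidx
    have hkt : 1 ≤ k + t := by omega
    have e3 : (2 : ℕ) ^ (t + 1) = 2 * 2 ^ t := by ring
    have e4 : (2 : ℕ) ^ (t + 1 + 1) = 4 * 2 ^ t := by ring
    have hLle : 2 ^ (t + 1) * L + 2 ^ (t + 1) ≤ 2 ^ (k + t) := by
      have h' : 2 ^ (t + 1) * L + 2 ^ (t + 1) = 2 ^ (t + 1) * (L + 1) := by ring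
      rw [h']
      calc 2 ^ (t + 1) * (L + 1) ≤ 2 ^ (t + 1) * 2 ^ (k - 1) :=
            Nat.mul_le_mul_left _ (by omega)
        _ = 2 ^ (t + 1 + (k - 1)) := (pow_add 2 (t + 1) (k - 1)).symm
        _ = 2 ^ (k + t) := by congr 1; omega
    obtain ⟨q, r, hr4, rfl⟩ : ∃ q r, r < 4 ∧ mm = 4 * q + r :=
      ⟨mm / 4, mm % 4, by omega, by omega⟩
    have hX : 2 ^ (t + 1) * L = 2 * (2 ^ t * L) := by ring
    have hY : 2 ^ (t + 1 + 1) * L = 4 * (2 ^ t * L) := by ring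
    have hq2 : 2 * q + 1 < 2 ^ (t + 1) := by omega
    have hp : 2 * (2 ^ t * L + q) + 1 < 2 ^ (k + t) := by omega
    have hd : (2 ^ (t + 1 + 1) * L + (4 * q + r) : ℕ) = 4 * (2 ^ t * L + q) + r := by omega
    have hidx0 : 2 ^ (t + 1) * L + 2 * q < 2 ^ (k + t) := by omega
    have hidx1 : 2 ^ (t + 1) * L + (2 * q + 1) < 2 ^ (k + t) := by omega
    have key := conj_diag (k + t) hkt (by ring) (iterA k A t)
      ⟨2 ^ (t + 1 + 1) * L + (4 * q + r), hidx⟩ (2 ^ t * L + q) r hd hr4 hp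
    rw [show iterA k A (t + 1) = Wmat (k + t) * mcast (by ring) (entryDup (iterA k A t)) *
      (Wmat (k + t))ᴴ from rfl]
    rw [key]
    have hious0 : (⟨2 * (2 ^ t * L + q), by omega⟩ : Fin (2 ^ (k + t))) =
        ⟨2 ^ (t + 1) * L + 2 * q, hidx0⟩ := Fin.ext (by simp; omega)
    have hious1 : (⟨2 * (2 ^ t * L + q) + 1, hp⟩ : Fin (2 ^ (k + t))) =
        ⟨2 ^ (t + 1) * L + (2 * q + 1), hidx1⟩ := Fin.ext (by simp; omega)
    have IH0 := IH L (2 * q) hL (by omega) hidx0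
    have IH1 := IH L (2 * q + 1) hL hq2 hidx1
    have c0 : ((2 * q + 1) / 2 : ℕ) = q := by omega
    have c1 : ((2 * q + 1 + 1) / 2 : ℕ) = q + 1 := by omega
    rw [c0] at IH0
    rw [c1] at IH1
    interval_cases r
    · rw [if_pos rfl, hious0, IH0]
      have cg : ((4 * q + 0 + 1) / 2 : ℕ) = 2 * q := by omega
      rw [cg]
      have hco : ((2 * q : ℕ) : ℂ) / 2 ^ (t + 1) = (q : ℂ) / 2 ^ t := by
        have h2t := pow_ne' t
        push_cast
        rw [pow_succ]
        field_simp
      rw [hco]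
    · rw [if_neg (by omega), if_neg (by omega), hious0, hious1, IH0, IH1]
      have cg : ((4 * q + 1 + 1) / 2 : ℕ) = 2 * q + 1 := by omega
      rw [cg]
      have h2t := pow_ne' t
      push_cast
      rw [pow_succ]
      field_simp
      ring
    · rw [if_neg (by omega), if_neg (by omega), hious0, hious1, IH0, IH1]
      have cg : ((4 * q + 2 + 1) / 2 : ℕ) = 2 * q + 1 := by omega
      rw [cg]
      have h2t := pow_ne' t
      push_cast
      rw [pow_succ]
      field_simp
      ring
    · rw [if_neg (by omega), if_pos rfl, hious1, IH1]
      have cg : ((4 * q + 3 + 1) / 2 : ℕ) = 2 * q + 2 := by omega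
      rw [cg]
      have h2t := pow_ne' t
      push_cast
      rw [pow_succ]
      field_simp

set_option maxHeartbeats 2000000 in
/-- Diagonal of `A(n)` (Lemma 3.5 (iii)): with `d_j = A_{jj}` (1-based), for every
`1 ≤ l ≤ 2^{k−1}` and `1 ≤ h ≤ 2^{n−1}`, the 1-based diagonal entry of `A(n)` at
`2^n(l−1)+2h−1` is `γ_{l,h−1}^n` and at `2^n(l−1)+2h` it is `γ_{l,h}^n`, where
`γ_{l,h}^n = d_{2l−1} + (h/2^{n−1})(d_{2l} − d_{2l−1})`.
Here `A(n) = iterA k A (n-1)`, and the 1-based index `i` corresponds to `i − 1`. -/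
theorem stmt_9 (k : ℕ) (hk : 1 ≤ k) (A : Matrix (Fin (2 ^ k)) (Fin (2 ^ k)) ℂ)
    (n : ℕ) (hn : 1 ≤ n)
    (l : ℕ) (hl1 : 1 ≤ l) (hl2 : l ≤ 2 ^ (k - 1))
    (h : ℕ) (hh1 : 1 ≤ h) (hh2 : h ≤ 2 ^ (n - 1)) :
    iterA k A (n - 1)
        ⟨2 ^ n * (l - 1) + 2 * h - 2, by have := idxBound hk hn hl1 hl2 hh2; omega⟩
        ⟨2 ^ n * (l - 1) + 2 * h - 2, by have := idxBound hk hn hl1 hl2 hh2; omega⟩ =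
      A ⟨2 * l - 2, by have := twoLBound hk hl2; omega⟩
          ⟨2 * l - 2, by have := twoLBound hk hl2; omega⟩ +
        (((h - 1 : ℕ) : ℂ) / 2 ^ (n - 1)) *
          (A ⟨2 * l - 1, by have := twoLBound hk hl2; omega⟩
              ⟨2 * l - 1, by have := twoLBound hk hl2; omega⟩ -
            A ⟨2 * l - 2, by have := twoLBound hk hl2; omega⟩
              ⟨2 * l - 2, by have := twoLBound hk hl2; omega⟩) ∧
    iterA k A (n - 1)
        ⟨2 ^ n * (l - 1) + 2 * h - 1, by have := idxBound hk hn hl1 hl2 hh2; omega⟩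
        ⟨2 ^ n * (l - 1) + 2 * h - 1, by have := idxBound hk hn hl1 hl2 hh2; omega⟩ =
      A ⟨2 * l - 2, by have := twoLBound hk hl2; omega⟩
          ⟨2 * l - 2, by have := twoLBound hk hl2; omega⟩ +
        ((h : ℂ) / 2 ^ (n - 1)) *
          (A ⟨2 * l - 1, by have := twoLBound hk hl2; omega⟩
              ⟨2 * l - 1, by have := twoLBound hk hl2; omega⟩ -
            A ⟨2 * l - 2, by have := twoLBound hk hl2; omega⟩
              ⟨2 * l - 2, by have := twoLBound hk hl2; omega⟩) := by
  have hpow : (2 : ℕ) ^ k = 2 * 2 ^ (k - 1) := by rw [← pow_succ']; congr 1; omega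
  have hpn : (2 : ℕ) ^ n = 2 * 2 ^ (n - 1) := by rw [← pow_succ']; congr 1; omega
  have h2L : ∀ L : ℕ, L < 2 ^ (k - 1) → 2 * L + 1 < 2 ^ k := by intro L hL; omega
  have hb := idxBound hk hn hl1 hl2 hh2
  have hnn : n - 1 + 1 = n := by omega
  have hidx1 : 2 ^ (n - 1 + 1) * (l - 1) + (2 * h - 2) < 2 ^ (k + (n - 1)) := by
    rw [hnn]; omega
  have hidx2 : 2 ^ (n - 1 + 1) * (l - 1) + (2 * h - 1) < 2 ^ (k + (n - 1)) := by
    rw [hnn]; omega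
  have D1 := diag_formula k hk A h2L (n - 1) (l - 1) (2 * h - 2) (by omega)
    (by rw [hnn]; omega) hidx1
  have D2 := diag_formula k hk A h2L (n - 1) (l - 1) (2 * h - 1) (by omega)
    (by rw [hnn]; omega) hidx2
  have f1 : (⟨2 ^ (n - 1 + 1) * (l - 1) + (2 * h - 2), hidx1⟩ : Fin (2 ^ (k + (n - 1)))) =
      ⟨2 ^ n * (l - 1) + 2 * h - 2, by omega⟩ := Fin.ext (by simp [hnn]; omega)
  have f2 : (⟨2 ^ (n - 1 + 1) * (l - 1) + (2 * h - 1), hidx2⟩ : Fin (2 ^ (k + (n - 1)))) =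
      ⟨2 ^ n * (l - 1) + 2 * h - 1, by omega⟩ := Fin.ext (by simp [hnn]; omega)
  have g1 : (⟨2 * (l - 1), by omega⟩ : Fin (2 ^ k)) = ⟨2 * l - 2, by omega⟩ :=
    Fin.ext (by simp; omega)
  have g2 : (⟨2 * (l - 1) + 1, h2L (l - 1) (by omega)⟩ : Fin (2 ^ k)) =
      ⟨2 * l - 1, by omega⟩ := Fin.ext (by simp; omega)
  have ce1 : ((2 * h - 2 + 1) / 2 : ℕ) = h - 1 := by omega
  have ce2 : ((2 * h - 1 + 1) / 2 : ℕ) = h := by omega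
  simp only [f1, g1, g2, ce1] at D1
  simp only [f2, g1, g2, ce2] at D2
  constructor
  · exact D1
  · exact D2
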